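/- arXiv:0902.3977 — 2 statements merged into one kernel-verified Lean document; each statement's English description precedes it below -/
import Mathlib

section
/- Closed-form formula for the leave-p-out estimator of the risk of a regressogram (Theorem 1): let n ≥ 2, let Λ be a partition of {1,…,n} into blocks λ with n_λ := card(λ) ≥ 2, and let p be an integer with 1 ≤ p < min_λ n_λ. Let Y_1,…,Y_n be arbitrary real numbers and, for each block λ, set S_{λ,1} := Σ_{i∈λ} Y_i and S_{λ,2} := Σ_{i∈λ} Y_i². For a training set I_t ⊆ {1,…,n} of cardinality n−p, let ŝ^{I_t} be defined on indices by: ŝ^{I_t}(j) is the mean of {Y_i : i ∈ I_t, i in the same block as j} (this set is nonempty because p < n_λ). Define the leave-p-out estimator R̂_p := C(n,p)^{-1} Σ_{I_t ⊆ {1,…,n}, card(I_t)=n−p} p^{-1} Σ_{j∉I_t} (Y_j − ŝ^{I_t}(j))². For each block λ and k ∈ {−1,0,1}, set V_λ(k) := Σ_{r≥1} r^k · C(n−p, r)·C(p, n_λ−r) / C(n, n_λ) (binomial coefficients being zero outside their range), A_λ := V_λ(0)·(1 − 1/n_λ) − V_λ(1)/n_λ + V_λ(−1), and B_λ := V_λ(1)·(2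 − 1_{n_λ≥3})/(n_λ(n_λ−1)) + (V_λ(0)/(n_λ−1))·((1 + 1/n_λ)·1_{n_λ≥3} − 2) − V_λ(−1)·1_{n_λ≥3}/(n_λ−1). Then R̂_p = Σ_{λ∈Λ} p^{-1} [ (A_λ − B_λ)·S_{λ,2} + B_λ·S_{λ,1}² ]. -/
open Finset

namespace LpoClosedForm

variable {n : ℕ} {ι : Type*} [Fintype ι] [DecidableEq ι]

/-- The block (fiber) of the partition `c` with label `b`. -/
def blockOf (c : Fin n → ι) (b : ι) : Finset (Fin n) :=
  Finset.univ.filter (fun i => c i = b)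

/-- Prediction of the regressogram trained on `It` at the index `j`: the mean of the
training values `Y i` for `i ∈ It` lying in the same block as `j`. -/
noncomputable def pred (c : Fin n → ι) (Y : Fin n → ℝ) (It : Finset (Fin n)) (j : Fin n) : ℝ :=
  (∑ i ∈ It.filter (fun i => c i = c j), Y i) /
    ((It.filter (fun i => c i = c j)).card : ℝ)

/-- The leave-`p`-out estimator of the risk of the regressogram associated with the
partition `c`: average over all training sets `It` of cardinality `n − p` of the mean
squared prediction error on the validation set `{1,…,n} ∖ It`. -/
noncomputable def lpoRisk (c : Fin n → ι) (Y : Fin n → ℝ) (p : ℕ) : ℝ :=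
  ((n.choose p : ℝ))⁻¹ *
    ∑ It ∈ Finset.powersetCard (n - p) (Finset.univ : Finset (Fin n)),
      (p : ℝ)⁻¹ * ∑ j ∈ Finset.univ \ It, (Y j - pred c Y It j) ^ 2

/-- `V_λ(k) = ∑_{r ≥ 1} r^k C(n−p, r) C(p, n_λ−r) / C(n, n_λ)`, binomial coefficients
being zero outside their range (all terms with `r > n` vanish). -/
noncomputable def Vcoef (n p nl : ℕ) (k : ℤ) : ℝ :=
  ∑ r ∈ Finset.Icc 1 n,
    (r : ℝ) ^ k * ((n - p).choose r : ℝ) *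
      (if r ≤ nl then ((p.choose (nl - r)) : ℝ) else 0) / ((n.choose nl) : ℝ)

/-- `A_λ = V_λ(0)(1 − 1/n_λ) − V_λ(1)/n_λ + V_λ(−1)`. -/
noncomputable def Acoef (n p nl : ℕ) : ℝ :=
  Vcoef n p nl 0 * (1 - 1 / (nl : ℝ)) - Vcoef n p nl 1 / (nl : ℝ) + Vcoef n p nl (-1)

/-- `B_λ = V_λ(1)(2 − 1_{n_λ≥3})/(n_λ(n_λ−1)) + (V_λ(0)/(n_λ−1))((1 + 1/n_λ)1_{n_λ≥3} − 2)
          − V_λ(−1)·1_{n_λ≥3}/(n_λ−1)`. -/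
noncomputable def Bcoef (n p nl : ℕ) : ℝ :=
  Vcoef n p nl 1 * (2 - if 3 ≤ nl then (1 : ℝ) else 0) / ((nl : ℝ) * ((nl : ℝ) - 1))
    + Vcoef n p nl 0 / ((nl : ℝ) - 1) *
        ((1 + 1 / (nl : ℝ)) * (if 3 ≤ nl then (1 : ℝ) else 0) - 2)
    - Vcoef n p nl (-1) * (if 3 ≤ nl then (1 : ℝ) else 0) / ((nl : ℝ) - 1)

/-! ### Auxiliary lemmas -/

section Counting

variable {α : Type*} [DecidableEq α]

lemma count_mem_aux (s : Finset α) (r : ℕ) (a : α) (ha : a ∈ s) :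
    ((powersetCard (r+1) s).filter (fun J => a ∈ J)).card
      = (powersetCard r (s.erase a)).card := by
  apply Finset.card_nbij' (fun J => J.erase a) (fun J => insert a J)
  · intro J hJ
    simp only [Finset.mem_coe] at hJ ⊢
    simp only [mem_filter, mem_powersetCard] at hJ
    obtain ⟨⟨hsub, hcard⟩, haJ⟩ := hJ
    simp only [mem_powersetCard]
    exact ⟨Finset.erase_subset_erase a hsub,
      by rw [card_erase_of_mem haJ, hcard]; rfl⟩
  · intro J hJ
    simp only [Finset.mem_coe] at hJ ⊢
    simp only [mem_powersetCard] at hJ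
    obtain ⟨hsub, hcard⟩ := hJ
    have haJ : a ∉ J := fun h => (Finset.notMem_erase a s) (hsub h)
    simp only [mem_filter, mem_powersetCard]
    refine ⟨⟨?_, ?_⟩, mem_insert_self a J⟩
    · intro x hx
      rcases Finset.mem_insert.1 hx with h | h
      · exact h ▸ ha
      · exact (Finset.erase_subset a s) (hsub h)
    · rw [card_insert_of_notMem haJ, hcard]
  · intro J hJ
    simp only [Finset.mem_coe] at hJ ⊢
    simp only [mem_filter] at hJ
    exact Finset.insert_erase hJ.2
  · intro J hJ
    simp only [Finset.mem_coe] at hJ ⊢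
    simp only [mem_powersetCard] at hJ
    have haJ : a ∉ J := fun h => (Finset.notMem_erase a s) (hJ.1 h)
    exact Finset.erase_insert haJ

lemma count_mem (s : Finset α) (t : ℕ) (ht : 1 ≤ t) (a : α) (ha : a ∈ s) :
    ((powersetCard t s).filter (fun J => a ∈ J)).card = (s.card - 1).choose (t-1) := by
  obtain ⟨r, rfl⟩ : ∃ r, t = r + 1 := ⟨t - 1, by omega⟩
  rw [count_mem_aux s r a ha, card_powersetCard, card_erase_of_mem ha]
  congr 1

lemma count_mem_pair (s : Finset α) (t : ℕ) {a b : α} (ha : a ∈ s) (hb : b ∈ s) (hab : a ≠ b) :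
    ((powersetCard t s).filter (fun J => a ∈ J ∧ b ∈ J)).card
      = if 2 ≤ t then (s.card - 2).choose (t-2) else 0 := by
  match t with
  | 0 =>
    rw [if_neg (by omega)]
    rw [Finset.card_eq_zero, Finset.filter_eq_empty_iff]
    intro J hJ
    simp only [mem_powersetCard] at hJ
    have : J = ∅ := Finset.card_eq_zero.1 hJ.2
    simp [this]
  | 1 =>
    rw [if_neg (by omega)]
    rw [Finset.card_eq_zero, Finset.filter_eq_empty_iff]
    intro J hJ
    simp only [mem_powersetCard] at hJ
    rintro ⟨haJ, hbJ⟩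
    have : 2 ≤ J.card := by
      have : ({a, b} : Finset α) ⊆ J := by
        intro x hx; rcases Finset.mem_insert.1 hx with h | h
        · exact h ▸ haJ
        · exact (Finset.mem_singleton.1 h) ▸ hbJ
      calc 2 = ({a,b} : Finset α).card := (Finset.card_pair hab).symm
        _ ≤ J.card := Finset.card_le_card this
    omega
  | (r+2) =>
    rw [if_pos (by omega)]
    have key : ((powersetCard (r+2) s).filter (fun J => a ∈ J ∧ b ∈ J)).card
        = (powersetCard r ((s.erase a).erase b)).card := by
      apply Finset.card_nbij' (fun J => (J.erase a).erase b)
        (fun J => insert a (insert b J))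
      · intro J hJ
        simp only [Finset.mem_coe] at hJ ⊢
        simp only [mem_filter, mem_powersetCard] at hJ
        obtain ⟨⟨hsub, hcard⟩, haJ, hbJ⟩ := hJ
        simp only [mem_powersetCard]
        refine ⟨Finset.erase_subset_erase b (Finset.erase_subset_erase a hsub), ?_⟩
        rw [card_erase_of_mem (Finset.mem_erase.2 ⟨(Ne.symm hab), hbJ⟩),
          card_erase_of_mem haJ, hcard]
        omega
      · intro J hJ
        simp only [Finset.mem_coe] at hJ ⊢
        simp only [mem_powersetCard] at hJ
        obtain ⟨hsub, hcard⟩ := hJ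
        have hbJ : b ∉ J := fun h => (Finset.notMem_erase b _) (hsub h)
        have haJ : a ∉ insert b J := by
          simp only [Finset.mem_insert]
          rintro (h | h)
          · exact hab h
          · exact (Finset.notMem_erase a s) ((Finset.erase_subset b _) (hsub h))
        simp only [mem_filter, mem_powersetCard]
        refine ⟨⟨?_, ?_⟩, Finset.mem_insert_self a _,
          Finset.mem_insert_of_mem (Finset.mem_insert_self b _)⟩
        · intro x hx
          rcases Finset.mem_insert.1 hx with h | h
          · exact h ▸ ha
          rcases Finset.mem_insert.1 h with h' | h'
          · exact h' ▸ hb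
          · exact (Finset.erase_subset a s) ((Finset.erase_subset b _) (hsub h'))
        · rw [card_insert_of_notMem haJ, card_insert_of_notMem hbJ, hcard]
      · intro J hJ
        simp only [Finset.mem_coe] at hJ ⊢
        simp only [mem_filter] at hJ
        obtain ⟨_, haJ, hbJ⟩ := hJ
        rw [Finset.insert_erase (Finset.mem_erase.2 ⟨Ne.symm hab, hbJ⟩),
          Finset.insert_erase haJ]
      · intro J hJ
        simp only [Finset.mem_coe] at hJ ⊢
        simp only [mem_powersetCard] at hJ
        have hbJ : b ∉ J := fun h => (Finset.notMem_erase b _) (hJ.1 h)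
        have haJ : a ∉ insert b J := by
          simp only [Finset.mem_insert]
          rintro (h | h)
          · exact hab h
          · exact (Finset.notMem_erase a s) ((Finset.erase_subset b _) (hJ.1 h))
        rw [Finset.erase_insert haJ, Finset.erase_insert hbJ]
    rw [key, card_powersetCard, card_erase_of_mem (Finset.mem_erase.2 ⟨Ne.symm hab, hb⟩),
      card_erase_of_mem ha]
    congr 1 <;> omega

lemma moment1 (s : Finset α) (t : ℕ) (ht : 1 ≤ t) (f : α → ℝ) :
    ∑ J ∈ powersetCard t s, ∑ i ∈ J, f i
      = ((s.card - 1).choose (t-1) : ℝ) * ∑ i ∈ s, f i := by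
  calc ∑ J ∈ powersetCard t s, ∑ i ∈ J, f i
      = ∑ J ∈ powersetCard t s, ∑ i ∈ s, (if i ∈ J then f i else 0) := by
        refine Finset.sum_congr rfl fun J hJ => ?_
        rw [Finset.sum_ite_mem, Finset.inter_eq_right.mpr (mem_powersetCard.1 hJ).1]
    _ = ∑ i ∈ s, ∑ J ∈ powersetCard t s, (if i ∈ J then f i else 0) := Finset.sum_comm
    _ = ∑ i ∈ s, ((s.card - 1).choose (t-1) : ℝ) * f i := by
        refine Finset.sum_congr rfl fun i hi => ?_
        rw [← Finset.sum_filter, Finset.sum_const, count_mem s t ht i hi, nsmul_eq_mul]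
    _ = _ := by rw [← Finset.mul_sum]

lemma moment2 (s : Finset α) (t : ℕ) (ht : 1 ≤ t) (f : α → ℝ) :
    ∑ J ∈ powersetCard t s, (∑ i ∈ J, f i)^2
      = ((s.card - 1).choose (t-1) : ℝ) * ∑ i ∈ s, (f i)^2
        + (if 2 ≤ t then (((s.card - 2).choose (t-2) : ℕ) : ℝ) else 0) *
            ((∑ i ∈ s, f i)^2 - ∑ i ∈ s, (f i)^2) := by
  have key : ∀ J ∈ powersetCard t s, (∑ i ∈ J, f i)^2
      = ∑ i ∈ s, ∑ j ∈ s, (if i ∈ J ∧ j ∈ J then f i * f j else 0) := by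
    intro J hJ
    have hsub := (mem_powersetCard.1 hJ).1
    rw [sq, Finset.sum_mul_sum]
    have h1 : ∀ i, ∑ j ∈ J, f i * f j = ∑ j ∈ s, (if j ∈ J then f i * f j else 0) := by
      intro i
      rw [Finset.sum_ite_mem, Finset.inter_eq_right.mpr hsub]
    calc ∑ i ∈ J, ∑ j ∈ J, f i * f j
        = ∑ i ∈ s, (if i ∈ J then ∑ j ∈ J, f i * f j else 0) := by
          rw [Finset.sum_ite_mem, Finset.inter_eq_right.mpr hsub]
      _ = ∑ i ∈ s, ∑ j ∈ s, (if i ∈ J ∧ j ∈ J then f i * f j else 0) := by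
          refine Finset.sum_congr rfl fun i _ => ?_
          by_cases hi : i ∈ J
          · simp only [hi, if_true, true_and, h1]
          · simp [hi]
  rw [Finset.sum_congr rfl key]
  rw [Finset.sum_comm]
  have swap2 : ∀ i ∈ s, ∑ J ∈ powersetCard t s, ∑ j ∈ s, (if i ∈ J ∧ j ∈ J then f i * f j else 0)
      = ∑ j ∈ s, ∑ J ∈ powersetCard t s, (if i ∈ J ∧ j ∈ J then f i * f j else 0) :=
    fun i _ => Finset.sum_comm
  rw [Finset.sum_congr rfl swap2]
  have inner : ∀ i ∈ s, ∀ j ∈ s,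
      ∑ J ∈ powersetCard t s, (if i ∈ J ∧ j ∈ J then f i * f j else 0)
      = (((powersetCard t s).filter (fun J => i ∈ J ∧ j ∈ J)).card : ℝ) * (f i * f j) := by
    intro i _ j _
    rw [← Finset.sum_filter, Finset.sum_const, nsmul_eq_mul]
  have main : ∀ i ∈ s, ∑ j ∈ s, ∑ J ∈ powersetCard t s, (if i ∈ J ∧ j ∈ J then f i * f j else 0)
      = ((s.card - 1).choose (t-1) : ℝ) * (f i)^2
        + (if 2 ≤ t then (((s.card - 2).choose (t-2) : ℕ) : ℝ) else 0) *
            (f i * ((∑ j ∈ s, f j) - f i)) := by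
    intro i hi
    rw [← Finset.add_sum_erase _ _ hi]
    have diag : ∑ J ∈ powersetCard t s, (if i ∈ J ∧ i ∈ J then f i * f i else 0)
        = ((s.card - 1).choose (t-1) : ℝ) * (f i)^2 := by
      rw [inner i hi i hi]
      have e : (filter (fun J => i ∈ J ∧ i ∈ J) (powersetCard t s))
          = (filter (fun J => i ∈ J) (powersetCard t s)) := by
        apply Finset.filter_congr; intro J _; simp
      rw [e, count_mem s t ht i hi]
      ring
    rw [diag]
    congr 1
    have offd : ∀ j ∈ s.erase i, ∑ J ∈ powersetCard t s, (if i ∈ J ∧ j ∈ J then f i * f j else 0)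
        = (if 2 ≤ t then (((s.card - 2).choose (t-2) : ℕ) : ℝ) else 0) * (f i * f j) := by
      intro j hj
      rw [inner i hi j (Finset.mem_of_mem_erase hj)]
      rw [count_mem_pair s t hi (Finset.mem_of_mem_erase hj) (Ne.symm (Finset.ne_of_mem_erase hj))]
      split <;> simp
    rw [Finset.sum_congr rfl offd, ← Finset.mul_sum, ← Finset.mul_sum,
      Finset.sum_erase_eq_sub hi]
  rw [Finset.sum_congr rfl main, Finset.sum_add_distrib, ← Finset.mul_sum, ← Finset.mul_sum]
  congr 1
  congr 1
  have : ∑ i ∈ s, f i * ((∑ j ∈ s, f j) - f i)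
      = (∑ i ∈ s, f i)^2 - ∑ i ∈ s, (f i)^2 := by
    rw [Finset.sum_congr rfl (fun i (_ : i ∈ s) => mul_sub (f i) _ (f i)),
      Finset.sum_sub_distrib, ← Finset.sum_mul, sq]
    congr 1
    exact Finset.sum_congr rfl fun i _ => (sq (f i)) ▸ rfl
  rw [this]

lemma sum_F_eq (lam : Finset α) (r : ℕ) (hr1 : 1 ≤ r) (hrnl : r ≤ lam.card) (Y : α → ℝ) :
    ∑ J ∈ powersetCard r lam, ∑ j ∈ lam \ J, (Y j - (∑ i ∈ J, Y i)/(r:ℝ))^2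
      = (lam.card.choose r : ℝ) * (∑ i ∈ lam, Y i^2)
        - ((lam.card - 1).choose (r-1) : ℝ) * (∑ i ∈ lam, Y i^2)
        - (2/(r:ℝ)) * (∑ i ∈ lam, Y i) * (((lam.card - 1).choose (r-1) : ℝ) * (∑ i ∈ lam, Y i))
        + (2/(r:ℝ) + ((lam.card : ℝ) - (r:ℝ))/(r:ℝ)^2) *
            (((lam.card - 1).choose (r-1) : ℝ) * (∑ i ∈ lam, Y i^2)
              + (if 2 ≤ r then (((lam.card - 2).choose (r-2) : ℕ) : ℝ) else 0) *
                  ((∑ i ∈ lam, Y i)^2 - ∑ i ∈ lam, Y i^2)) := by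
  have hr0 : (r:ℝ) ≠ 0 := by positivity
  have perJ : ∀ J ∈ powersetCard r lam,
      ∑ j ∈ lam \ J, (Y j - (∑ i ∈ J, Y i)/(r:ℝ))^2
      = (∑ i ∈ lam, Y i^2) - (∑ i ∈ J, Y i^2)
        - (2/(r:ℝ))*(∑ i ∈ lam, Y i)*(∑ i ∈ J, Y i)
        + (2/(r:ℝ))*(∑ i ∈ J, Y i)^2
        + (((lam.card : ℝ) - (r:ℝ))/(r:ℝ)^2)*(∑ i ∈ J, Y i)^2 := by
    intro J hJ
    obtain ⟨hsub, hcard⟩ := mem_powersetCard.1 hJ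
    have expand : ∀ j ∈ lam \ J, (Y j - (∑ i ∈ J, Y i)/(r:ℝ))^2
        = Y j^2 - (2*((∑ i ∈ J, Y i)/(r:ℝ)))*Y j + ((∑ i ∈ J, Y i)/(r:ℝ))^2 := by
      intro j _; ring
    rw [Finset.sum_congr rfl expand, Finset.sum_add_distrib, Finset.sum_sub_distrib,
      Finset.sum_sdiff_eq_sub hsub, ← Finset.mul_sum, Finset.sum_sdiff_eq_sub hsub,
      Finset.sum_const, nsmul_eq_mul, Finset.card_sdiff_of_subset hsub, hcard,
      Nat.cast_sub hrnl]
    field_simp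
    ring
  rw [Finset.sum_congr rfl perJ, Finset.sum_add_distrib, Finset.sum_add_distrib,
    Finset.sum_sub_distrib, Finset.sum_sub_distrib, Finset.sum_const, card_powersetCard,
    nsmul_eq_mul, ← Finset.mul_sum, ← Finset.mul_sum, ← Finset.mul_sum,
    moment1 lam r hr1 (fun i => Y i^2), moment1 lam r hr1 Y,
    moment2 lam r hr1 Y]
  ring

end Counting

section Partition

variable {β : Type*} [DecidableEq β] [Fintype β]

lemma sum_powersetCard_inter (m : ℕ) (lam : Finset β) (F : Finset β → ℝ) :
    ∑ It ∈ powersetCard m (univ : Finset β), F (It ∩ lam)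
      = ∑ J ∈ lam.powerset,
          ((((univ : Finset β) \ lam).powerset.filter
            (fun K => J.card + K.card = m)).card : ℝ) * F J := by
  have step1 : ∑ It ∈ powersetCard m (univ : Finset β), F (It ∩ lam)
      = ∑ z ∈ (lam.powerset ×ˢ ((univ : Finset β) \ lam).powerset).filter
          (fun z => z.1.card + z.2.card = m), F z.1 := by
    apply Finset.sum_nbij' (fun It => (It ∩ lam, It \ lam)) (fun z => z.1 ∪ z.2)
    · intro It hIt
      simp only [mem_powersetCard] at hIt
      simp only [mem_filter, mem_product, mem_powerset]
      refine ⟨⟨inter_subset_right, Finset.sdiff_subset_sdiff hIt.1 (Finset.Subset.refl lam)⟩, ?_⟩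
      rw [Finset.card_inter_add_card_sdiff, hIt.2]
    · intro z hz
      simp only [mem_filter, mem_product, mem_powerset] at hz
      obtain ⟨⟨h1, h2⟩, h3⟩ := hz
      have hdisj : Disjoint z.1 z.2 := by
        rw [Finset.disjoint_left]
        intro x hx1 hx2
        exact (Finset.mem_sdiff.1 (h2 hx2)).2 (h1 hx1)
      simp only [mem_powersetCard]
      exact ⟨Finset.subset_univ _, by rw [Finset.card_union_of_disjoint hdisj, h3]⟩
    · intro It _
      rw [Finset.union_comm]
      exact Finset.sdiff_union_inter It lam
    · intro z hz
      simp only [mem_filter, mem_product, mem_powerset] at hz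
      obtain ⟨⟨h1, h2⟩, _⟩ := hz
      have hdisj : Disjoint z.2 lam := by
        rw [Finset.disjoint_left]
        intro x hx2 hxl
        exact (Finset.mem_sdiff.1 (h2 hx2)).2 hxl
      have e1 : (z.1 ∪ z.2) ∩ lam = z.1 := by
        rw [Finset.union_inter_distrib_right, Finset.inter_eq_left.2 h1,
          Finset.disjoint_iff_inter_eq_empty.1 hdisj, Finset.union_empty]
      have e2 : (z.1 ∪ z.2) \ lam = z.2 := by
        rw [Finset.union_sdiff_distrib, Finset.sdiff_eq_empty_iff_subset.2 h1,
          Finset.empty_union, Finset.sdiff_eq_self_of_disjoint hdisj]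
      exact Prod.ext e1 e2
    · intro It _
      rfl
  rw [step1, Finset.sum_filter, Finset.sum_product]
  refine Finset.sum_congr rfl fun J _ => ?_
  dsimp only
  rw [← Finset.sum_filter, Finset.sum_const, nsmul_eq_mul]

lemma weight_eq (s : Finset β) (r m : ℕ) :
    (s.powerset.filter (fun K => r + K.card = m)).card
      = if r ≤ m then s.card.choose (m - r) else 0 := by
  split
  · rw [← card_powersetCard]
    congr 1
    rw [powersetCard_eq_filter]
    apply Finset.filter_congr
    intro K _
    constructor
    · intro h; omega
    · intro h; omega
  · rw [Finset.card_eq_zero, Finset.filter_eq_empty_iff]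
    intro K _
    omega

end Partition

section NatIdentities

lemma nat_key {n p nl r : ℕ} (hp : p ≤ n) (hnl : nl ≤ n) (hr_nl : r ≤ nl)
    (hr_m : r ≤ n - p) (hnlpr : nl ≤ p + r) :
    (n - nl).choose (n - p - r) * (n.choose nl * nl.choose r)
      = n.choose p * ((n - p).choose r * p.choose (nl - r)) := by
  set a := nl - r with ha
  set b := n - p - r with hb
  have hab : a + b ≤ n - r := by omega
  have id1 : n.choose nl * nl.choose r = n.choose r * (n - r).choose a :=
    Nat.choose_mul hr_nl
  have id2 : n.choose (n - p) * (n - p).choose r = n.choose r * (n - r).choose b := by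
    have := Nat.choose_mul (n := n) hr_m
    rw [this]
  have mid1 : (n - r).choose (a + b) * (a + b).choose a
      = (n - r).choose a * (n - r - a).choose b := by
    have := Nat.choose_mul (n := n - r) (Nat.le_add_right a b)
    rw [this, show a + b - a = b by omega]
  have mid2 : (n - r).choose (a + b) * (a + b).choose b
      = (n - r).choose b * (n - r - b).choose a := by
    have := Nat.choose_mul (n := n - r) (Nat.le_add_left b a)
    rw [this, show a + b - b = a by omega]
  have hsymm : (a + b).choose a = (a + b).choose b := by
    have := Nat.choose_symm (Nat.le_add_left b a)
    rw [show a + b - b = a by omega] at this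
    exact this
  have e1 : n - r - a = n - nl := by omega
  have e2 : n - r - b = p := by omega
  have mid : (n - r).choose a * (n - nl).choose b = (n - r).choose b * p.choose a := by
    rw [← e1, ← e2, ← mid1, ← mid2, hsymm]
  have hcs : n.choose (n - p) = n.choose p := Nat.choose_symm hp
  calc (n - nl).choose b * (n.choose nl * nl.choose r)
      = n.choose r * ((n - r).choose a * (n - nl).choose b) := by rw [id1]; ring
    _ = n.choose r * ((n - r).choose b * p.choose a) := by rw [mid]
    _ = (n.choose r * (n - r).choose b) * p.choose a := by ring
    _ = (n.choose (n - p) * (n - p).choose r) * p.choose a := by rw [id2]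
    _ = n.choose p * ((n - p).choose r * p.choose a) := by rw [hcs]; ring

lemma succ_rel {nl r : ℕ} (hnl : 1 ≤ nl) (hr : 1 ≤ r) :
    nl * (nl - 1).choose (r - 1) = nl.choose r * r := by
  have := Nat.add_one_mul_choose_eq (nl - 1) (r - 1)
  rw [show nl - 1 + 1 = nl by omega, show r - 1 + 1 = r by omega] at this
  exact this

end NatIdentities

section Scalar

lemma scalar_main (W X X1 D P1 P2 P3 Q R L e S1 S2 : ℝ)
    (hR : R ≠ 0) (hL : L ≠ 0) (hL1 : L - 1 ≠ 0) (hQ : Q ≠ 0) (hX : X ≠ 0)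
    (eX1 : X1 = R * X / L) (eD : D = (R - 1) * X1 / (L - 1))
    (eW : W = P1 * (P2 * P3) / (Q * X)) (he : e = 1) :
    W * (X * S2 - X1 * S2 - 2 / R * S1 * (X1 * S1)
        + (2 / R + (L - R) / R ^ 2) * (X1 * S2 + D * (S1 ^ 2 - S2)))
      = P1 * ((R ^ (0:ℤ) * P2 * P3 / Q * (1 - 1 / L)
            - R ^ (1:ℤ) * P2 * P3 / Q / L
            + R ^ (-1:ℤ) * P2 * P3 / Q
            - (R ^ (1:ℤ) * P2 * P3 / Q * (2 - e) / (L * (L - 1))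
               + R ^ (0:ℤ) * P2 * P3 / Q / (L - 1) * ((1 + 1 / L) * e - 2)
               - R ^ (-1:ℤ) * P2 * P3 / Q * e / (L - 1))) * S2
          + (R ^ (1:ℤ) * P2 * P3 / Q * (2 - e) / (L * (L - 1))
             + R ^ (0:ℤ) * P2 * P3 / Q / (L - 1) * ((1 + 1 / L) * e - 2)
             - R ^ (-1:ℤ) * P2 * P3 / Q * e / (L - 1)) * S1 ^ 2) := by
  subst he eX1 eD eW
  simp only [zpow_zero, zpow_one, zpow_neg_one]
  field_simp
  ring

lemma scalar_two (W X X1 D P1 P2 P3 Q R L e S1 S2 : ℝ)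
    (hR : R ≠ 0) (hL : L ≠ 0) (hL1 : L - 1 ≠ 0) (hQ : Q ≠ 0) (hX : X ≠ 0)
    (eX1 : X1 = R * X / L) (eD : D = (R - 1) * X1 / (L - 1))
    (eW : W = P1 * (P2 * P3) / (Q * X)) (he : e = 0) (hL2 : L = 2)
    (hR12 : R = 1 ∨ R = 2) :
    W * (X * S2 - X1 * S2 - 2 / R * S1 * (X1 * S1)
        + (2 / R + (L - R) / R ^ 2) * (X1 * S2 + D * (S1 ^ 2 - S2)))
      = P1 * ((R ^ (0:ℤ) * P2 * P3 / Q * (1 - 1 / L)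
            - R ^ (1:ℤ) * P2 * P3 / Q / L
            + R ^ (-1:ℤ) * P2 * P3 / Q
            - (R ^ (1:ℤ) * P2 * P3 / Q * (2 - e) / (L * (L - 1))
               + R ^ (0:ℤ) * P2 * P3 / Q / (L - 1) * ((1 + 1 / L) * e - 2)
               - R ^ (-1:ℤ) * P2 * P3 / Q * e / (L - 1))) * S2
          + (R ^ (1:ℤ) * P2 * P3 / Q * (2 - e) / (L * (L - 1))
             + R ^ (0:ℤ) * P2 * P3 / Q / (L - 1) * ((1 + 1 / L) * e - 2)
             - R ^ (-1:ℤ) * P2 * P3 / Q * e / (L - 1)) * S1 ^ 2) := by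
  subst he hL2 eX1 eD eW
  simp only [zpow_zero, zpow_one, zpow_neg_one]
  rcases hR12 with h | h <;> subst h <;> norm_num <;> field_simp <;> ring

end Scalar

set_option maxHeartbeats 1000000 in
lemma block_sum (c : Fin n → ι) (b : ι) (p : ℕ) (hp1 : 1 ≤ p)
    (h2 : 2 ≤ (blockOf c b).card) (hp2 : p < (blockOf c b).card) (Y : Fin n → ℝ) :
    ∑ It ∈ powersetCard (n - p) (univ : Finset (Fin n)),
        ∑ j ∈ (univ \ It).filter (fun j => c j = b), (Y j - pred c Y It j)^2
      = (n.choose p : ℝ) *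
          ((Acoef n p (blockOf c b).card - Bcoef n p (blockOf c b).card)
              * (∑ i ∈ blockOf c b, Y i^2)
            + Bcoef n p (blockOf c b).card * (∑ i ∈ blockOf c b, Y i)^2) := by
  set lam := blockOf c b with hlam
  have hnl : lam.card ≤ n := by
    have := Finset.card_le_univ lam
    simpa [Finset.card_univ] using this
  set m := n - p with hm
  have step1 : ∀ It ∈ powersetCard m (univ : Finset (Fin n)),
      ∑ j ∈ (univ \ It).filter (fun j => c j = b), (Y j - pred c Y It j)^2
      = ∑ j ∈ lam \ (It ∩ lam),
          (Y j - (∑ i ∈ It ∩ lam, Y i)/((It ∩ lam).card : ℝ))^2 := by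
    intro It _
    have hval : (univ \ It).filter (fun j => c j = b) = lam \ It := by
      ext j
      simp only [hlam, blockOf, Finset.mem_sdiff, Finset.mem_filter, Finset.mem_univ,
        true_and]
      tauto
    have hval2 : lam \ It = lam \ (It ∩ lam) := (Finset.sdiff_inter_self_right lam It).symm
    rw [hval, hval2]
    refine Finset.sum_congr rfl fun j hj => ?_
    have hjb : c j = b := by
      have hjl : j ∈ lam := (Finset.mem_sdiff.1 hj).1
      simpa [hlam, blockOf] using hjl
    have hfil : It.filter (fun i => c i = c j) = It ∩ lam := by
      ext i
      simp [hlam, blockOf, Finset.mem_inter, Finset.mem_filter, hjb]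
    simp only [pred, hfil]
  rw [Finset.sum_congr rfl step1,
    sum_powersetCard_inter m lam
      (fun J => ∑ j ∈ lam \ J, (Y j - (∑ i ∈ J, Y i)/((J.card : ℕ) : ℝ))^2),
    Finset.sum_powerset]
  have step4 : ∀ r ∈ range (lam.card + 1),
      ∑ J ∈ powersetCard r lam,
        ((((univ : Finset (Fin n)) \ lam).powerset.filter
            (fun K => J.card + K.card = m)).card : ℝ)
          * ∑ j ∈ lam \ J, (Y j - (∑ i ∈ J, Y i)/((J.card : ℕ) : ℝ))^2
      = (((if r ≤ m then (n - lam.card).choose (m - r) else 0) : ℕ) : ℝ)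
          * ∑ J ∈ powersetCard r lam,
              ∑ j ∈ lam \ J, (Y j - (∑ i ∈ J, Y i)/(r : ℝ))^2 := by
    intro r _
    rw [Finset.mul_sum]
    refine Finset.sum_congr rfl fun J hJ => ?_
    obtain ⟨hsub, hcard⟩ := mem_powersetCard.1 hJ
    have hw : (((univ : Finset (Fin n)) \ lam).powerset.filter
        (fun K => J.card + K.card = m)).card
        = if r ≤ m then (n - lam.card).choose (m - r) else 0 := by
      rw [weight_eq]
      have hcd : ((univ : Finset (Fin n)) \ lam).card = n - lam.card := by
        rw [Finset.card_sdiff_of_subset (Finset.subset_univ lam), Finset.card_univ, Fintype.card_fin]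
      rw [hcard, hcd]
    rw [hw, hcard]
  rw [Finset.sum_congr rfl step4]
  set g : ℕ → ℝ := fun r =>
    (((if r ≤ m then (n - lam.card).choose (m - r) else 0) : ℕ) : ℝ)
      * ∑ J ∈ powersetCard r lam, ∑ j ∈ lam \ J, (Y j - (∑ i ∈ J, Y i)/(r : ℝ))^2
    with hg
  have hg0 : g 0 = 0 := by
    have hch : (n - lam.card).choose m = 0 :=
      Nat.choose_eq_zero_of_lt (by omega)
    simp [hg, hch]
  have hgz : ∀ r, lam.card < r → g r = 0 := by
    intro r hr
    simp [hg, Finset.powersetCard_eq_empty.2 hr]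
  have e1 : ∑ r ∈ Finset.Icc 1 lam.card, g r = ∑ r ∈ range (lam.card + 1), g r := by
    apply Finset.sum_subset
    · intro x hx
      simp only [Finset.mem_Icc] at hx
      simp only [Finset.mem_range]
      omega
    · intro x hx hnx
      simp only [Finset.mem_range] at hx
      simp only [Finset.mem_Icc] at hnx
      have : x = 0 := by omega
      rw [this]; exact hg0
  have e2 : ∑ r ∈ Finset.Icc 1 lam.card, g r = ∑ r ∈ Finset.Icc 1 n, g r := by
    apply Finset.sum_subset (Finset.Icc_subset_Icc_right hnl)
    intro x hx hnx
    simp only [Finset.mem_Icc] at hx hnx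
    exact hgz x (by omega)
  rw [← e1, e2]
  have hA : Acoef n p lam.card = ∑ r ∈ Finset.Icc 1 n,
      ((r : ℝ) ^ (0:ℤ) * ((n - p).choose r : ℝ) *
          (if r ≤ lam.card then ((p.choose (lam.card - r)) : ℝ) else 0) / ((n.choose lam.card) : ℝ)
            * (1 - 1 / (lam.card : ℝ))
        - (r : ℝ) ^ (1:ℤ) * ((n - p).choose r : ℝ) *
          (if r ≤ lam.card then ((p.choose (lam.card - r)) : ℝ) else 0) / ((n.choose lam.card) : ℝ)
            / (lam.card : ℝ)
        + (r : ℝ) ^ (-1:ℤ) * ((n - p).choose r : ℝ) *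
          (if r ≤ lam.card then ((p.choose (lam.card - r)) : ℝ) else 0) / ((n.choose lam.card) : ℝ)) := by
    rw [Acoef, Vcoef, Vcoef, Vcoef, Finset.sum_mul, Finset.sum_div,
      ← Finset.sum_sub_distrib, ← Finset.sum_add_distrib]
  have hB : Bcoef n p lam.card = ∑ r ∈ Finset.Icc 1 n,
      ((r : ℝ) ^ (1:ℤ) * ((n - p).choose r : ℝ) *
          (if r ≤ lam.card then ((p.choose (lam.card - r)) : ℝ) else 0) / ((n.choose lam.card) : ℝ)
            * (2 - if 3 ≤ lam.card then (1:ℝ) else 0) / ((lam.card : ℝ) * ((lam.card : ℝ) - 1))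
        + (r : ℝ) ^ (0:ℤ) * ((n - p).choose r : ℝ) *
          (if r ≤ lam.card then ((p.choose (lam.card - r)) : ℝ) else 0) / ((n.choose lam.card) : ℝ)
            / ((lam.card : ℝ) - 1) * ((1 + 1 / (lam.card : ℝ)) * (if 3 ≤ lam.card then (1:ℝ) else 0) - 2)
        - (r : ℝ) ^ (-1:ℤ) * ((n - p).choose r : ℝ) *
          (if r ≤ lam.card then ((p.choose (lam.card - r)) : ℝ) else 0) / ((n.choose lam.card) : ℝ)
            * (if 3 ≤ lam.card then (1:ℝ) else 0) / ((lam.card : ℝ) - 1)) := by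
    rw [Bcoef, Vcoef, Vcoef, Vcoef]
    simp only [Finset.sum_mul, Finset.sum_div]
    rw [← Finset.sum_add_distrib, ← Finset.sum_sub_distrib]
  rw [hA, hB, ← Finset.sum_sub_distrib, Finset.sum_mul, Finset.sum_mul,
    ← Finset.sum_add_distrib, Finset.mul_sum]
  refine Finset.sum_congr rfl fun r hr => ?_
  simp only [Finset.mem_Icc] at hr
  obtain ⟨hr1, hrn⟩ := hr
  simp only [hg]
  by_cases hrnl : r ≤ lam.card
  · rw [sum_F_eq lam r hr1 hrnl Y]
    simp only [if_pos hrnl]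
    by_cases hrm : r ≤ m
    · rw [if_pos hrm]
      by_cases hcase : lam.card ≤ p + r
      · -- main algebraic case
        have hpn : p ≤ n := by omega
        have hCnl0 : ((n.choose lam.card : ℕ) : ℝ) ≠ 0 :=
          Nat.cast_ne_zero.2 (Nat.choose_pos hnl).ne'
        have hX0 : ((lam.card.choose r : ℕ) : ℝ) ≠ 0 :=
          Nat.cast_ne_zero.2 (Nat.choose_pos hrnl).ne'
        have hr0 : (r : ℝ) ≠ 0 := by
          have : (0:ℝ) < r := by exact_mod_cast Nat.pos_of_ne_zero (by omega)
          linarith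
        have hnl0 : ((lam.card : ℕ) : ℝ) ≠ 0 := by
          have : (0:ℝ) < (lam.card : ℝ) := by exact_mod_cast Nat.pos_of_ne_zero (by omega)
          linarith
        have h2R : (2:ℝ) ≤ (lam.card : ℝ) := by exact_mod_cast h2
        have hnl1 : ((lam.card : ℝ)) - 1 ≠ 0 := by intro h; linarith
        have h1 : (lam.card : ℝ) * (((lam.card - 1).choose (r-1) : ℕ) : ℝ)
            = ((lam.card.choose r : ℕ) : ℝ) * (r : ℝ) := by
          exact_mod_cast congrArg (Nat.cast (R := ℝ)) (succ_rel (by omega) hr1)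
        have h3 : (((n - lam.card).choose (m - r) : ℕ) : ℝ)
              * (((n.choose lam.card : ℕ) : ℝ) * ((lam.card.choose r : ℕ) : ℝ))
            = ((n.choose p : ℕ) : ℝ) * ((((n-p).choose r : ℕ) : ℝ)
              * ((p.choose (lam.card - r) : ℕ) : ℝ)) := by
          exact_mod_cast congrArg (Nat.cast (R := ℝ))
            (nat_key hpn hnl hrnl (by omega) hcase)
        have eX1 : (((lam.card - 1).choose (r-1) : ℕ) : ℝ)
            = (r : ℝ) * ((lam.card.choose r : ℕ) : ℝ) / (lam.card : ℝ) := by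
          rw [eq_div_iff hnl0]; linarith [h1]
        have eD : (if 2 ≤ r then (((lam.card - 2).choose (r-2) : ℕ) : ℝ) else 0)
            = ((r : ℝ) - 1) * (((lam.card - 1).choose (r-1) : ℕ) : ℝ) / ((lam.card : ℝ) - 1) := by
          by_cases h2r : 2 ≤ r
          · rw [if_pos h2r, eq_div_iff hnl1]
            have hnat : (lam.card - 1) * ((lam.card - 2).choose (r-2))
                = (lam.card - 1).choose (r-1) * (r-1) := by
              have := succ_rel (show 1 ≤ lam.card - 1 by omega) (show 1 ≤ r - 1 by omega)
              rw [show lam.card - 1 - 1 = lam.card - 2 by omega,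
                show r - 1 - 1 = r - 2 by omega] at this
              exact this
            have hc := congrArg (Nat.cast (R := ℝ)) hnat
            push_cast [Nat.cast_sub (show 1 ≤ lam.card by omega), Nat.cast_sub hr1] at hc
            linarith [hc]
          · have hre : r = 1 := by omega
            rw [if_neg h2r, hre]
            norm_num
        have eW : (((n - lam.card).choose (m - r) : ℕ) : ℝ)
            = ((n.choose p : ℕ) : ℝ) * ((((n-p).choose r : ℕ) : ℝ)
                * ((p.choose (lam.card - r) : ℕ) : ℝ))
              / (((n.choose lam.card : ℕ) : ℝ) * ((lam.card.choose r : ℕ) : ℝ)) := by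
          rw [eq_div_iff (mul_ne_zero hCnl0 hX0)]; linarith [h3]
        by_cases he : 3 ≤ lam.card
        · exact scalar_main _ _ _ _ _ _ _ _ _ _ _ _ _
            hr0 hnl0 hnl1 hCnl0 hX0 eX1 eD eW (if_pos he)
        · have hnl2 : lam.card = 2 := by omega
          refine scalar_two _ _ _ _ _ _ _ _ _ _ _ _ _
            hr0 hnl0 hnl1 hCnl0 hX0 eX1 eD eW (if_neg he) ?_ ?_
          · rw [hnl2]; norm_num
          · have : r = 1 ∨ r = 2 := by omega
            rcases this with h | h
            · left; rw [h]; norm_num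
            · right; rw [h]; norm_num
      · have hz1 : p.choose (lam.card - r) = 0 := Nat.choose_eq_zero_of_lt (by omega)
        have hz2 : (n - lam.card).choose (m - r) = 0 := Nat.choose_eq_zero_of_lt (by omega)
        rw [hz1, hz2]
        push_cast
        ring
    · rw [if_neg hrm]
      have hz : (n-p).choose r = 0 := Nat.choose_eq_zero_of_lt (by omega)
      rw [hz]
      push_cast
      ring
  · have hemp : powersetCard r lam = ∅ := Finset.powersetCard_eq_empty.2 (by omega)
    rw [hemp]
    simp only [Finset.sum_empty, mul_zero, if_neg hrnl]
    push_cast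
    ring

/-- **Closed-form formula for the leave-`p`-out estimator of the risk of a
regressogram** (Theorem 1).  If every block of the partition `c` has at least two
elements and `1 ≤ p < min_λ n_λ`, then for arbitrary real numbers `Y₁, …, Yₙ`,
`R̂_p = ∑_{λ∈Λ} p⁻¹ [(A_λ − B_λ) S_{λ,2} + B_λ S_{λ,1}²]`. -/
theorem lpo_closed_form (hn : 2 ≤ n) (c : Fin n → ι)
    (hblocks : ∀ b : ι, 2 ≤ (blockOf c b).card)
    (p : ℕ) (hp1 : 1 ≤ p) (hp2 : ∀ b : ι, p < (blockOf c b).card)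
    (Y : Fin n → ℝ) :
    lpoRisk c Y p
      = ∑ b : ι, (p : ℝ)⁻¹ *
          ((Acoef n p (blockOf c b).card - Bcoef n p (blockOf c b).card) *
              (∑ i ∈ blockOf c b, Y i ^ 2)
            + Bcoef n p (blockOf c b).card * (∑ i ∈ blockOf c b, Y i) ^ 2) := by
  classical
  have hne : 0 < n := by omega
  have hpn : p ≤ n := by
    have h := hp2 (c ⟨0, hne⟩)
    have hle : (blockOf c (c ⟨0, hne⟩)).card ≤ n := by
      have := Finset.card_le_univ (blockOf c (c ⟨0, hne⟩))
      simpa [Finset.card_univ] using this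
    omega
  have hC0 : ((n.choose p : ℕ) : ℝ) ≠ 0 := Nat.cast_ne_zero.2 (Nat.choose_pos hpn).ne'
  rw [lpoRisk]
  have hsplit : ∀ It : Finset (Fin n),
      (p:ℝ)⁻¹ * ∑ j ∈ univ \ It, (Y j - pred c Y It j)^2
      = ∑ b : ι, (p:ℝ)⁻¹ * ∑ j ∈ (univ \ It).filter (fun j => c j = b),
          (Y j - pred c Y It j)^2 := by
    intro It
    rw [← Finset.mul_sum,
      Finset.sum_fiberwise (univ \ It) c (fun j => (Y j - pred c Y It j)^2)]
  rw [Finset.sum_congr rfl (fun It _ => hsplit It), Finset.sum_comm, Finset.mul_sum]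
  refine Finset.sum_congr rfl fun b _ => ?_
  rw [← Finset.mul_sum, block_sum c b p hp1 (hblocks b) (hp2 b) Y,
    mul_left_comm, inv_mul_cancel_left₀ hC0]

end LpoClosedForm
end

section
/- Exact expectation of the leave-one-out risk estimator of a regressogram: in the fixed-design heteroscedastic regression model, let Λ be a partition of {1,…,n} into blocks λ with n_λ := card(λ) ≥ 2. Then the leave-one-out estimator R̂_1 := n^{-1} Σ_{j=1}^n (Y_j − mean{Y_i : i ∈ λ(j), i ≠ j})², where λ(j) is the block containing j, satisfies E[R̂_1] = n^{-1} Σ_{λ∈Λ} [ (n_λ/(n_λ−1))² Σ_{i∈λ} (s(t_i) − s̄_λ)² + (n_λ/(n_λ−1)) Σ_{i∈λ} σ(t_i)² ], where s̄_λ := n_λ^{-1} Σ_{i∈λ} s(t_i). -/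
open MeasureTheory ProbabilityTheory Finset

namespace LooExpectation

variable {n : ℕ} {ι : Type*} [Fintype ι] [DecidableEq ι]

/-- The block (fiber) of the partition `c` with label `b`. -/
def blockOf (c : Fin n → ι) (b : ι) : Finset (Fin n) :=
  Finset.univ.filter (fun i => c i = b)

/-- Leave-one-out prediction at `j`: the mean of the values `Y i` for `i` in the block
containing `j`, `i ≠ j`. -/
noncomputable def looPred (c : Fin n → ι) (Y : Fin n → ℝ) (j : Fin n) : ℝ :=
  (∑ i ∈ (blockOf c (c j)).erase j, Y i) / (((blockOf c (c j)).erase j).card : ℝ)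

set_option linter.unusedSectionVars false

/-- Constant coefficient of the affine decomposition of the leave-one-out residual. -/
noncomputable def coefC (c : Fin n → ι) (f : Fin n → ℝ) (j : Fin n) : ℝ :=
  f j - (∑ i ∈ (blockOf c (c j)).erase j, f i) / (((blockOf c (c j)).erase j).card : ℝ)

/-- Linear coefficients of the affine decomposition of the leave-one-out residual. -/
noncomputable def coefK (c : Fin n → ι) (g : Fin n → ℝ) (j i : Fin n) : ℝ :=
  if i = j then g j
  else if i ∈ (blockOf c (c j)).erase j then
    -(g i) / (((blockOf c (c j)).erase j).card : ℝ)
  else 0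

lemma loo_decomp (c : Fin n → ι) (f g e : Fin n → ℝ) (j : Fin n) :
    (f j + g j * e j) - looPred c (fun i => f i + g i * e i) j
      = coefC c f j + ∑ i, coefK c g j i * e i := by
  classical
  unfold looPred coefC coefK
  set E := (blockOf c (c j)).erase j with hE
  set d : ℝ := (E.card : ℝ) with hd
  have hjE : j ∉ E := Finset.notMem_erase j _
  have h1 : (∑ i : Fin n, (if i = j then g j else if i ∈ E then -(g i) / d else 0) * e i)
      = g j * e j + ∑ i ∈ E, (-(g i) / d) * e i := by
    rw [← Finset.sum_subset (Finset.subset_univ (insert j E))]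
    · rw [Finset.sum_insert hjE, if_pos rfl]
      congr 1
      refine Finset.sum_congr rfl fun i hi => ?_
      rw [if_neg (Finset.ne_of_mem_erase hi), if_pos hi]
    · intro i _ hi
      simp only [Finset.mem_insert, not_or] at hi
      rw [if_neg hi.1, if_neg hi.2, zero_mul]
  rw [h1, Finset.sum_add_distrib]
  have h3 : ∑ i ∈ E, (-(g i) / d) * e i = -((∑ i ∈ E, g i * e i) / d) := by
    calc ∑ i ∈ E, (-(g i) / d) * e i = ∑ i ∈ E, -(g i * e i / d) :=
          Finset.sum_congr rfl fun i _ => by ring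
      _ = -∑ i ∈ E, g i * e i / d := by rw [Finset.sum_neg_distrib]
      _ = -((∑ i ∈ E, g i * e i) / d) := by rw [Finset.sum_div]
  rw [h3]
  ring

lemma coefK_sq_sum (c : Fin n → ι) (g : Fin n → ℝ) (j : Fin n) :
    ∑ i, coefK c g j i ^ 2
      = g j ^ 2 + (∑ i ∈ (blockOf c (c j)).erase j, g i ^ 2)
          / (((blockOf c (c j)).erase j).card : ℝ) ^ 2 := by
  classical
  unfold coefK
  set E := (blockOf c (c j)).erase j with hE
  set d : ℝ := (E.card : ℝ) with hd
  have hjE : j ∉ E := Finset.notMem_erase j _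
  rw [← Finset.sum_subset (Finset.subset_univ (insert j E))]
  · rw [Finset.sum_insert hjE, if_pos rfl]
    congr 1
    calc (∑ i ∈ E, (if i = j then g j else if i ∈ E then -(g i) / d else 0) ^ 2)
        = ∑ i ∈ E, g i ^ 2 / d ^ 2 := by
          refine Finset.sum_congr rfl fun i hi => ?_
          rw [if_neg (Finset.ne_of_mem_erase hi), if_pos hi]
          ring
      _ = (∑ i ∈ E, g i ^ 2) / d ^ 2 := by rw [Finset.sum_div]
  · intro i _ hi
    simp only [Finset.mem_insert, not_or] at hi
    rw [if_neg hi.1, if_neg hi.2]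
    norm_num

lemma block_sum (c : Fin n → ι) (f g : Fin n → ℝ) (b : ι) (hb : 2 ≤ (blockOf c b).card) :
    ∑ j ∈ blockOf c b,
        (coefC c f j ^ 2
          + (g j ^ 2 + (∑ i ∈ (blockOf c (c j)).erase j, g i ^ 2)
              / (((blockOf c (c j)).erase j).card : ℝ) ^ 2))
      = (((blockOf c b).card : ℝ) / (((blockOf c b).card : ℝ) - 1)) ^ 2 *
          ∑ i ∈ blockOf c b, (f i - (∑ j ∈ blockOf c b, f j) / ((blockOf c b).card : ℝ)) ^ 2
        + (((blockOf c b).card : ℝ) / (((blockOf c b).card : ℝ) - 1)) *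
          ∑ i ∈ blockOf c b, g i ^ 2 := by
  classical
  set B := blockOf c b with hB
  have hM : (2:ℝ) ≤ (B.card:ℝ) := by exact_mod_cast hb
  have hM0 : (B.card:ℝ) ≠ 0 := by linarith
  have hM1 : (B.card:ℝ) - 1 ≠ 0 := by linarith
  have hBj : ∀ j ∈ B, blockOf c (c j) = B := by
    intro j hj
    have : c j = b := (Finset.mem_filter.mp hj).2
    rw [this]
  have hcard : ∀ j ∈ B, ((B.erase j).card : ℝ) = (B.card:ℝ) - 1 := by
    intro j hj
    rw [Finset.card_erase_of_mem hj, Nat.cast_sub (by omega : 1 ≤ B.card), Nat.cast_one]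
  have hterm : ∀ j ∈ B,
      coefC c f j ^ 2
        + (g j ^ 2 + (∑ i ∈ (blockOf c (c j)).erase j, g i ^ 2)
            / (((blockOf c (c j)).erase j).card : ℝ) ^ 2)
      = ((B.card:ℝ)/((B.card:ℝ)-1))^2 * (f j - (∑ i ∈ B, f i)/(B.card:ℝ))^2
        + (g j ^ 2 + ((∑ i ∈ B, g i ^ 2) - g j ^ 2) / ((B.card:ℝ)-1)^2) := by
    intro j hj
    unfold coefC
    rw [hBj j hj, hcard j hj, Finset.sum_erase_eq_sub hj, Finset.sum_erase_eq_sub hj]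
    congr 1
    have hC : f j - ((∑ i ∈ B, f i) - f j)/((B.card:ℝ)-1)
        = ((B.card:ℝ)/((B.card:ℝ)-1)) * (f j - (∑ i ∈ B, f i)/(B.card:ℝ)) := by
      field_simp
      ring
    rw [hC, mul_pow]
  rw [Finset.sum_congr rfl hterm, Finset.sum_add_distrib, ← Finset.mul_sum]
  congr 1
  rw [Finset.sum_add_distrib]
  have h4 : ∑ j ∈ B, ((∑ i ∈ B, g i ^ 2) - g j ^ 2) / ((B.card:ℝ)-1)^2
      = ((B.card:ℝ) * (∑ i ∈ B, g i ^ 2) - ∑ i ∈ B, g i ^ 2) / ((B.card:ℝ)-1)^2 := by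
    rw [← Finset.sum_div, Finset.sum_sub_distrib, Finset.sum_const, nsmul_eq_mul]
  rw [h4]
  field_simp
  ring

section prob
variable {Ω : Type*} [MeasurableSpace Ω] {μ : Measure Ω} [IsProbabilityMeasure μ]
variable {ε : Fin n → Ω → ℝ}

lemma integrable_mul_eps (hindep : iIndepFun ε μ)
    (hint1 : ∀ i, Integrable (ε i) μ)
    (hint2 : ∀ i, Integrable (fun ω => ε i ω ^ 2) μ)
    (i j : Fin n) : Integrable (fun ω => ε i ω * ε j ω) μ := by
  rcases eq_or_ne i j with rfl | hij
  · simpa [sq] using hint2 i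
  · exact (hindep.indepFun hij).integrable_mul (hint1 i) (hint1 j)

lemma integral_affine_sq
    (hindep : iIndepFun ε μ)
    (hint1 : ∀ i, Integrable (ε i) μ)
    (hint2 : ∀ i, Integrable (fun ω => ε i ω ^ 2) μ)
    (hmean : ∀ i, ∫ ω, ε i ω ∂μ = 0) (hvar : ∀ i, ∫ ω, ε i ω ^ 2 ∂μ = 1)
    (C : ℝ) (κ : Fin n → ℝ) :
    Integrable (fun ω => (C + ∑ i, κ i * ε i ω) ^ 2) μ ∧
    ∫ ω, (C + ∑ i, κ i * ε i ω) ^ 2 ∂μ = C ^ 2 + ∑ i, κ i ^ 2 := by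
  have hT : ∀ ω, ((∑ i, κ i * ε i ω) ^ 2 : ℝ)
      = ∑ i, ∑ j, (κ i * κ j) * (ε i ω * ε j ω) := by
    intro ω
    rw [sq, Finset.sum_mul_sum]
    exact Finset.sum_congr rfl fun i _ => Finset.sum_congr rfl fun j _ => by ring
  have hpt : ∀ ω, (C + ∑ i, κ i * ε i ω) ^ 2
      = C ^ 2 + 2 * C * (∑ i, κ i * ε i ω)
        + ∑ i, ∑ j, (κ i * κ j) * (ε i ω * ε j ω) := by
    intro ω
    rw [add_sq, hT ω]
  have hI1 : Integrable (fun ω => C ^ 2 + 2 * C * (∑ i, κ i * ε i ω)) μ := by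
    exact (integrable_const _).add
      ((integrable_finset_sum _ fun i _ => (hint1 i).const_mul (κ i)).const_mul (2 * C))
  have hI2 : Integrable (fun ω => ∑ i, ∑ j, (κ i * κ j) * (ε i ω * ε j ω)) μ := by
    refine integrable_finset_sum _ fun i _ => integrable_finset_sum _ fun j _ => ?_
    exact (integrable_mul_eps hindep hint1 hint2 i j).const_mul _
  have hint : Integrable (fun ω => (C + ∑ i, κ i * ε i ω) ^ 2) μ :=
    (hI1.add hI2).congr (ae_of_all _ fun ω => (hpt ω).symm)
  refine ⟨hint, ?_⟩
  have hmm : ∀ i j : Fin n, ∫ ω, ε i ω * ε j ω ∂μ = if i = j then 1 else 0 := by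
    intro i j
    rcases eq_or_ne i j with rfl | hij
    · simpa [sq] using hvar i
    · rw [if_neg hij]
      have := (hindep.indepFun hij).integral_mul_eq_mul_integral (hint1 i).1 (hint1 j).1
      simp only [Pi.mul_apply] at this
      rw [show (fun ω => ε i ω * ε j ω) = (ε i * ε j) from rfl] at *
      rw [this, hmean i, hmean j, mul_zero]
  calc ∫ ω, (C + ∑ i, κ i * ε i ω) ^ 2 ∂μ
      = ∫ ω, (C ^ 2 + 2 * C * (∑ i, κ i * ε i ω)
          + ∑ i, ∑ j, (κ i * κ j) * (ε i ω * ε j ω)) ∂μ :=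
        integral_congr_ae (ae_of_all _ hpt)
    _ = (∫ ω, (C ^ 2 + 2 * C * (∑ i, κ i * ε i ω)) ∂μ)
        + ∫ ω, ∑ i, ∑ j, (κ i * κ j) * (ε i ω * ε j ω) ∂μ := integral_add hI1 hI2
    _ = C ^ 2 + ∑ i, κ i ^ 2 := by
        have e1 : ∫ ω, (C ^ 2 + 2 * C * (∑ i, κ i * ε i ω)) ∂μ = C ^ 2 := by
          rw [integral_add (integrable_const _)
            ((integrable_finset_sum _ fun i _ => (hint1 i).const_mul (κ i)).const_mul (2 * C)),
            integral_const, integral_const_mul,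
            integral_finset_sum _ (fun i _ => (hint1 i).const_mul (κ i))]
          simp only [measure_univ, ENNReal.toReal_one, smul_eq_mul, one_mul]
          have : ∀ i : Fin n, ∫ ω, κ i * ε i ω ∂μ = 0 := fun i => by
            rw [integral_const_mul, hmean i, mul_zero]
          rw [Finset.sum_congr rfl fun i _ => this i]
          simp
        have e2 : ∫ ω, ∑ i, ∑ j, (κ i * κ j) * (ε i ω * ε j ω) ∂μ = ∑ i, κ i ^ 2 := by
          rw [integral_finset_sum _ (fun i _ => integrable_finset_sum _ fun j _ =>
            (integrable_mul_eps hindep hint1 hint2 i j).const_mul _)]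
          refine Finset.sum_congr rfl fun i _ => ?_
          rw [integral_finset_sum _ (fun j _ =>
            (integrable_mul_eps hindep hint1 hint2 i j).const_mul _)]
          have : ∀ j : Fin n, ∫ ω, (κ i * κ j) * (ε i ω * ε j ω) ∂μ
              = (κ i * κ j) * if i = j then 1 else 0 := fun j => by
            rw [integral_const_mul, hmm i j]
          rw [Finset.sum_congr rfl fun j _ => this j]
          simp [Finset.sum_ite_eq, sq]
        rw [e1, e2]

end prob

/-- **Exact expectation of the leave-one-out risk estimator of a regressogram.**
In the fixed-design heteroscedastic regression model `Y i = s (t i) + σ (t i) * ε i`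
with `ε₁, …, εₙ` i.i.d., centered, of unit variance, if every block of the partition
`c` has at least two elements, then
`E[R̂₁] = n⁻¹ ∑_λ [(n_λ/(n_λ−1))² ∑_{i∈λ} (s(tᵢ) − s̄_λ)² + (n_λ/(n_λ−1)) ∑_{i∈λ} σ(tᵢ)²]`. -/
theorem expected_loo_risk
    {Ω : Type*} [MeasurableSpace Ω] (μ : Measure Ω) [IsProbabilityMeasure μ]
    (hn : 0 < n)
    (t : Fin n → ℝ) (ht : StrictMono t) (ht01 : ∀ i, t i ∈ Set.Icc (0 : ℝ) 1)
    (s σ : ℝ → ℝ) (hσ : ∀ x, 0 ≤ σ x)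
    (ε : Fin n → Ω → ℝ) (hmeas : ∀ i, Measurable (ε i))
    (hindep : iIndepFun ε μ)
    (hident : ∀ i j, IdentDistrib (ε i) (ε j) μ μ)
    (hint1 : ∀ i, Integrable (ε i) μ)
    (hint2 : ∀ i, Integrable (fun ω => ε i ω ^ 2) μ)
    (hmean : ∀ i, ∫ ω, ε i ω ∂μ = 0) (hvar : ∀ i, ∫ ω, ε i ω ^ 2 ∂μ = 1)
    (Y : Fin n → Ω → ℝ) (hY : ∀ i ω, Y i ω = s (t i) + σ (t i) * ε i ω)
    (c : Fin n → ι) (hblocks : ∀ b : ι, 2 ≤ (blockOf c b).card) :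
    ∫ ω, (n : ℝ)⁻¹ * ∑ j : Fin n, (Y j ω - looPred c (fun i => Y i ω) j) ^ 2 ∂μ
      = (n : ℝ)⁻¹ * ∑ b : ι,
          ((((blockOf c b).card : ℝ) / (((blockOf c b).card : ℝ) - 1)) ^ 2 *
              ∑ i ∈ blockOf c b,
                (s (t i) -
                  (∑ j ∈ blockOf c b, s (t j)) / ((blockOf c b).card : ℝ)) ^ 2
            + (((blockOf c b).card : ℝ) / (((blockOf c b).card : ℝ) - 1)) *
                ∑ i ∈ blockOf c b, σ (t i) ^ 2) := by
  classical
  have hkey : ∀ j : Fin n,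
      Integrable (fun ω => (Y j ω - looPred c (fun i => Y i ω) j) ^ 2) μ ∧
      ∫ ω, (Y j ω - looPred c (fun i => Y i ω) j) ^ 2 ∂μ
        = coefC c (fun i => s (t i)) j ^ 2
          + ((fun i => σ (t i)) j ^ 2
            + (∑ i ∈ (blockOf c (c j)).erase j, (fun i => σ (t i)) i ^ 2)
              / (((blockOf c (c j)).erase j).card : ℝ) ^ 2) := by
    intro j
    have hpt : ∀ ω, Y j ω - looPred c (fun i => Y i ω) j
        = coefC c (fun i => s (t i)) j
          + ∑ i, coefK c (fun i => σ (t i)) j i * ε i ω := by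
      intro ω
      simp only [hY]
      exact loo_decomp c (fun i => s (t i)) (fun i => σ (t i)) (fun i => ε i ω) j
    have H := integral_affine_sq hindep hint1 hint2 hmean hvar
      (coefC c (fun i => s (t i)) j) (fun i => coefK c (fun i => σ (t i)) j i)
    constructor
    · exact H.1.congr (ae_of_all _ fun ω => congrArg (· ^ 2) (hpt ω).symm)
    · calc ∫ ω, (Y j ω - looPred c (fun i => Y i ω) j) ^ 2 ∂μ
          = ∫ ω, (coefC c (fun i => s (t i)) j
              + ∑ i, coefK c (fun i => σ (t i)) j i * ε i ω) ^ 2 ∂μ :=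
            integral_congr_ae (ae_of_all _ fun ω => congrArg (· ^ 2) (hpt ω))
        _ = coefC c (fun i => s (t i)) j ^ 2
            + ∑ i, coefK c (fun i => σ (t i)) j i ^ 2 := H.2
        _ = _ := by rw [coefK_sq_sum]
  rw [integral_const_mul, integral_finset_sum _ (fun j _ => (hkey j).1),
    Finset.sum_congr rfl (fun j _ => (hkey j).2)]
  congr 1
  rw [← Finset.sum_fiberwise Finset.univ c (fun j =>
    coefC c (fun i => s (t i)) j ^ 2
      + ((fun i => σ (t i)) j ^ 2
        + (∑ i ∈ (blockOf c (c j)).erase j, (fun i => σ (t i)) i ^ 2)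
          / (((blockOf c (c j)).erase j).card : ℝ) ^ 2))]
  refine Finset.sum_congr rfl fun b _ => ?_
  exact block_sum c (fun i => s (t i)) (fun i => σ (t i)) b (hblocks b)

end LooExpectation
end
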